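/- Let m be an odd positive integer, B ∈ 𝒯 with B ≠ 0, and d ∈ 𝔽_q. The number of quadruples (X,Y,Z,W) ∈ 𝒯⁴ satisfying X + Y + Z + W = 2B in R and x³ + y³ + z³ + w³ = b³·d in 𝔽_q equals: 3·2^m if d = 0; 0 if d ∈ M_0 ∪ M_1; and 6·2^m if d ∈ M_3. -/

import Mathlib

open Polynomial

/-- The residue field `𝔽_q = R/2R` of the Galois ring `R = (ℤ/4ℤ)[x]/(f)`. -/
abbrev ResField (f : Polynomial (ZMod 4)) : Type :=
  AdjoinRoot f ⧸ (Ideal.span {2} : Ideal (AdjoinRoot f))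

/-- Reduction modulo 2, `μ : R → R/2R`. -/
noncomputable def muRed (f : Polynomial (ZMod 4)) : AdjoinRoot f →+* ResField f :=
  Ideal.Quotient.mk _

/-- The number of roots of `z³ + z + d` in `𝔽_q`. -/
noncomputable def cubicRoots (f : Polynomial (ZMod 4)) (d : ResField f) : ℕ :=
  Nat.card {z : ResField f // z ^ 3 + z + d = 0}

open Function

section AbsField
variable {K : Type*} [Field K]

lemma sq_inj' (h2 : (2:K) = 0) {a b : K} (h : a^2 = b^2) : a = b := by
  have h3 : (a - b)^2 = 0 := by linear_combination h + (b^2 - a*b) * h2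
  exact sub_eq_zero.mp (pow_eq_zero_iff two_ne_zero |>.mp h3)

lemma count_pairs_zero (h2 : (2:K) = 0) :
    Nat.card {p : K × K // p.1^2 + p.1*p.2 + p.2^2 = 1 ∧ p.1*p.2*(p.1+p.2) = 0} = 3 := by
  have hset : {p : K × K | p.1^2 + p.1*p.2 + p.2^2 = 1 ∧ p.1*p.2*(p.1+p.2) = 0}
      = {((1:K),(1:K)), ((0:K),(1:K)), ((1:K),(0:K))} := by
    ext ⟨s,t⟩
    simp only [Set.mem_setOf_eq, Set.mem_insert_iff, Set.mem_singleton_iff, Prod.mk.injEq]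
    constructor
    · rintro ⟨h1, hz⟩
      rcases mul_eq_zero.mp hz with hst | hsum
      · rcases mul_eq_zero.mp hst with hs | ht
        · refine Or.inr (Or.inl ⟨hs, ?_⟩)
          subst hs
          exact sq_inj' h2 (by linear_combination h1)
        · refine Or.inr (Or.inr ⟨?_, ht⟩)
          subst ht
          exact sq_inj' h2 (by linear_combination h1)
      · have ht : t = s := by linear_combination hsum - s*h2
        subst ht
        have hs1 : t = 1 := sq_inj' h2 (by linear_combination h1 - t^2*h2)
        exact Or.inl ⟨hs1, hs1⟩
    · rintro (⟨hs,ht⟩|⟨hs,ht⟩|⟨hs,ht⟩) <;> subst hs <;> subst ht <;>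
        exact ⟨by first | ring1 | linear_combination h2, by first | ring1 | linear_combination h2⟩
  have hcoe : Nat.card {p : K × K // p.1^2 + p.1*p.2 + p.2^2 = 1 ∧ p.1*p.2*(p.1+p.2) = 0}
      = ({((1:K),(1:K)), ((0:K),(1:K)), ((1:K),(0:K))} : Set (K × K)).ncard := by
    rw [← hset]
    exact Nat.card_coe_set_eq _
  rw [hcoe]
  have h01 : (0:K) ≠ 1 := zero_ne_one
  rw [Set.ncard_insert_of_notMem (by simp [Prod.ext_iff]) (Set.toFinite _),
      Set.ncard_pair (by simp [Prod.ext_iff])]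

/-- For `d ≠ 0`, pairs `(s,t)` with `s²+st+t²=1, st(s+t)=d` biject with ordered pairs of
distinct roots of `z³+z+d`. -/
noncomputable def pairEquiv (h2 : (2:K) = 0) {d : K} (hd : d ≠ 0) :
    {p : K × K // p.1^2 + p.1*p.2 + p.2^2 = 1 ∧ p.1*p.2*(p.1+p.2) = d} ≃
    {q : {z : K // z^3 + z + d = 0} × {z : K // z^3 + z + d = 0} // q.1 ≠ q.2} where
  toFun p :=
    ⟨(⟨p.1.1, by
        obtain ⟨⟨s,t⟩, h1, hD⟩ := p
        linear_combination s*h1 - hD + s*h2⟩,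
      ⟨p.1.1 + p.1.2, by
        obtain ⟨⟨s,t⟩, h1, hD⟩ := p
        linear_combination (s+t)*h1 - hD + ((s+t)*(s*t+1))*h2⟩), by
      obtain ⟨⟨s,t⟩, h1, hD⟩ := p
      intro hc
      have hval : s = s + t := congrArg Subtype.val hc
      have ht : t = 0 := by linear_combination -hval
      apply hd
      rw [ht] at hD
      simpa using hD.symm⟩
  invFun q :=
    ⟨(q.1.1.1, q.1.1.1 + q.1.2.1), by
      obtain ⟨⟨⟨s,hs⟩,⟨σ,hσ⟩⟩, hne⟩ := q
      have hsne : s - σ ≠ 0 := sub_ne_zero.mpr fun h => hne (by simp [Prod.ext_iff, Subtype.ext_iff, h])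
      have key : (s - σ) * (s^2 + s*σ + σ^2 + 1) = 0 := by linear_combination hs - hσ
      have G : s^2 + s*σ + σ^2 = 1 := by
        have := (mul_eq_zero.mp key).resolve_left hsne
        linear_combination this - h2
      constructor
      · linear_combination G + (s^2 + s*σ)*h2
      · linear_combination σ*G - hσ + (s^3 + s^2*σ + σ)*h2⟩
  left_inv p := by
    obtain ⟨⟨s,t⟩, h1, hD⟩ := p
    exact Subtype.ext (Prod.ext_iff.mpr ⟨rfl, by simpa using (by linear_combination s*h2 : s + (s + t) = t)⟩)
  right_inv q := by
    obtain ⟨⟨⟨s,hs⟩,⟨σ,hσ⟩⟩, hne⟩ := q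
    refine Subtype.ext (Prod.ext_iff.mpr ⟨rfl, Subtype.ext ?_⟩)
    simpa using (by linear_combination s*h2 : s + (s + σ) = σ)

lemma count_pairs_ne [Finite K] (h2 : (2:K) = 0) {d : K} (hd : d ≠ 0) :
    Nat.card {p : K × K // p.1^2 + p.1*p.2 + p.2^2 = 1 ∧ p.1*p.2*(p.1+p.2) = d}
      = Nat.card {z : K // z^3 + z + d = 0} * Nat.card {z : K // z^3 + z + d = 0}
        - Nat.card {z : K // z^3 + z + d = 0} := by
  classical
  set C := {z : K // z^3 + z + d = 0}
  letI : Fintype K := Fintype.ofFinite K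
  letI : Fintype C := Fintype.ofFinite C
  rw [Nat.card_congr (pairEquiv h2 hd)]
  have hdiag : Fintype.card {q : C × C // q.1 = q.2} = Fintype.card C := by
    refine Fintype.card_congr ⟨fun q => q.1.1, fun c => ⟨(c,c), rfl⟩, ?_, fun c => rfl⟩
    rintro ⟨⟨a,b⟩, h⟩
    cases h
    rfl
  have : Nat.card {q : C × C // q.1 ≠ q.2} = Fintype.card {q : C × C // ¬ q.1 = q.2} :=
    Nat.card_eq_fintype_card
  rw [this, Fintype.card_subtype_compl, hdiag, Fintype.card_prod]
  simp [Nat.card_eq_fintype_card]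

/-- Quadruples with the `e₂` and cube conditions biject with (normalized pair) × K. -/
noncomputable def quadEquiv (h2 : (2:K) = 0) {b : K} (hb : b ≠ 0) (d : K) :
    {v : K × K × K × K //
      v.1 + v.2.1 + v.2.2.1 + v.2.2.2 = 0 ∧
      v.1*v.2.1 + v.1*v.2.2.1 + v.1*v.2.2.2 + v.2.1*v.2.2.1 + v.2.1*v.2.2.2 + v.2.2.1*v.2.2.2 = b^2 ∧
      v.1^3 + v.2.1^3 + v.2.2.1^3 + v.2.2.2^3 = b^3*d} ≃
    {p : K × K // p.1^2 + p.1*p.2 + p.2^2 = 1 ∧ p.1*p.2*(p.1+p.2) = d} × K where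
  toFun v :=
    (⟨(b⁻¹*(v.1.1 + v.1.2.1), b⁻¹*(v.1.2.1 + v.1.2.2.1)), by
      obtain ⟨⟨x,y,z,w⟩, hsum, hE, hC⟩ := v
      have hw : w = x + y + z := by linear_combination hsum - (x+y+z)*h2
      subst hw
      have key1 : (x+y)^2 + (x+y)*(y+z) + (y+z)^2 = b^2 := by
        linear_combination hE + (y^2 - x*z)*h2
      have key2 : (x+y)*(y+z)*((x+y)+(y+z)) = b^3*d := by
        linear_combination hC - (x^3 + x^2*z + x*z^2 + z^3 + x^2*y + x*y*z + y*z^2)*h2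
      have hbi : b⁻¹ * b = 1 := inv_mul_cancel₀ hb
      constructor
      · linear_combination (b⁻¹^2)*key1 + (b⁻¹*b + 1)*hbi
      · linear_combination (b⁻¹^3)*key2 + (d*((b⁻¹*b)^2 + b⁻¹*b + 1))*hbi⟩, v.1.2.1)
  invFun p :=
    ⟨(b*p.1.1.1 + p.2, p.2, b*p.1.1.2 + p.2, b*p.1.1.1 + b*p.1.1.2 + p.2), by
      obtain ⟨⟨⟨s,t⟩, hp1, hp2⟩, y⟩ := p
      refine ⟨by linear_combination (b*s + b*t + 2*y)*h2, ?_, ?_⟩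
      · linear_combination b^2*hp1 + (3*y^2 + 3*t*y*b + 3*s*y*b + s*t*b^2)*h2
      · linear_combination b^3*hp2 + (2*y^3 + 3*t*y^2*b + 3*t^2*y*b^2 + t^3*b^3 + 3*s*y^2*b
          + 3*s*t*y*b^2 + s*t^2*b^3 + 3*s^2*y*b^2 + s^2*t*b^3 + s^3*b^3)*h2⟩
  left_inv v := by
    obtain ⟨⟨x,y,z,w⟩, hsum, hE, hC⟩ := v
    have hbx : b*(b⁻¹*(x+y)) = x + y := by field_simp
    have hbz : b*(b⁻¹*(y+z)) = y + z := by field_simp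
    refine Subtype.ext ?_
    show (b*(b⁻¹*(x+y)) + y, y, b*(b⁻¹*(y+z)) + y, b*(b⁻¹*(x+y)) + b*(b⁻¹*(y+z)) + y) = (x,y,z,w)
    rw [hbx, hbz]
    refine Prod.ext (by linear_combination y*h2) (Prod.ext rfl (Prod.ext (by linear_combination y*h2) ?_))
    show x + y + (y + z) + y = w
    linear_combination hsum + (y - w)*h2
  right_inv p := by
    obtain ⟨⟨⟨s,t⟩, hp1, hp2⟩, y⟩ := p
    refine Prod.ext (Subtype.ext (Prod.ext ?_ ?_)) rfl
    · show b⁻¹*((b*s + y) + y) = s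
      have hbi : b⁻¹ * b = 1 := inv_mul_cancel₀ hb
      linear_combination s*hbi + (b⁻¹*y)*h2
    · show b⁻¹*((y : K) + (b*t + y)) = t
      have hbi : b⁻¹ * b = 1 := inv_mul_cancel₀ hb
      linear_combination t*hbi + (b⁻¹*y)*h2

lemma count_quads [Finite K] (h2 : (2:K) = 0) {b : K} (hb : b ≠ 0) (d : K) :
    Nat.card {v : K × K × K × K //
      v.1 + v.2.1 + v.2.2.1 + v.2.2.2 = 0 ∧
      v.1*v.2.1 + v.1*v.2.2.1 + v.1*v.2.2.2 + v.2.1*v.2.2.1 + v.2.1*v.2.2.2 + v.2.2.1*v.2.2.2 = b^2 ∧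
      v.1^3 + v.2.1^3 + v.2.2.1^3 + v.2.2.2^3 = b^3*d}
    = Nat.card K * Nat.card {p : K × K // p.1^2 + p.1*p.2 + p.2^2 = 1 ∧ p.1*p.2*(p.1+p.2) = d} := by
  rw [Nat.card_congr (quadEquiv h2 hb d), Nat.card_prod]
  ring
open Function

section Teich
variable {R : Type*} [CommRing R] {K : Type*} [CommRing K] (μ : R →+* K) (m : ℕ)

lemma bridge_card
    (hmpos : 0 < m)
    (h4 : (4:R) = 0)
    (hsurj : Surjective μ)
    (hker : ∀ r : R, μ r = 0 ↔ ∃ s, r = 2*s)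
    (hann : ∀ r : R, 2*r = 0 → ∃ s, r = 2*s)
    (hfix : ∀ x : K, x^(2^m) = x)
    (h2K : (2:K) = 0)
    (hsqinj : ∀ a c : K, a^2 = c^2 → a = c)
    (hsqsurj : ∀ a : K, ∃ c, c^2 = a)
    (B : R) (hB : B^(2^m) = B) (d : K) :
    Nat.card {t : R × R × R × R //
      (t.1 ^ 2 ^ m = t.1 ∧ t.2.1 ^ 2 ^ m = t.2.1 ∧ t.2.2.1 ^ 2 ^ m = t.2.2.1 ∧
        t.2.2.2 ^ 2 ^ m = t.2.2.2) ∧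
      t.1 + t.2.1 + t.2.2.1 + t.2.2.2 = 2 * B ∧
      μ t.1 ^ 3 + μ t.2.1 ^ 3 + μ t.2.2.1 ^ 3 + μ t.2.2.2 ^ 3 = μ B ^ 3 * d}
    = Nat.card {v : K × K × K × K //
      v.1 + v.2.1 + v.2.2.1 + v.2.2.2 = 0 ∧
      v.1*v.2.1 + v.1*v.2.2.1 + v.1*v.2.2.2 + v.2.1*v.2.2.1 + v.2.1*v.2.2.2 + v.2.2.1*v.2.2.2
        = (μ B)^2 ∧
      v.1^3 + v.2.1^3 + v.2.2.1^3 + v.2.2.2^3 = (μ B)^3 * d} := by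
  obtain ⟨k, hk⟩ : ∃ k, m = k + 1 := ⟨m - 1, (Nat.succ_pred_eq_of_pos hmpos).symm⟩
  -- the section of μ
  set sec : K → R := surjInv hsurj with hsec_def
  have hsec : ∀ x, μ (sec x) = x := fun x => surjInv_eq hsurj x
  -- congruence of 2^m-th powers
  have hcong : ∀ r r' : R, μ r = μ r' → r^(2^m) = r'^(2^m) := by
    intro r r' h
    obtain ⟨s, hs⟩ := (hker (r - r')).mp (by rw [map_sub, h, sub_self])
    have hr : r = r' + 2*s := by linear_combination hs
    have hsq : r^2 = r'^2 := by rw [hr]; linear_combination (r'*s + s^2)*h4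
    calc r^(2^m) = (r^2)^(2^k) := by rw [← pow_mul, hk, pow_succ, mul_comm]
    _ = (r'^2)^(2^k) := by rw [hsq]
    _ = r'^(2^m) := by rw [← pow_mul, hk, pow_succ, mul_comm]
  set tau : K → R := fun x => (sec x)^(2^m) with htau_def
  have hμτ : ∀ x, μ (tau x) = x := by
    intro x
    rw [htau_def]
    simp only [map_pow, hsec]
    exact hfix x
  have htauT : ∀ x, (tau x)^(2^m) = tau x := fun x =>
    hcong (tau x) (sec x) (by rw [hμτ, hsec])
  have htaufix : ∀ X : R, X^(2^m) = X → tau (μ X) = X := by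
    intro X hX
    have := hcong (sec (μ X)) X (hsec _)
    rw [htau_def]
    simpa [hX] using this
  have htau0 : tau 0 = 0 := by
    have := hcong (sec 0) 0 (by rw [hsec, map_zero])
    rw [htau_def]
    simpa [zero_pow (pow_ne_zero m two_ne_zero)] using this
  have htwo : ∀ r r' : R, μ r = μ r' → 2*r = 2*r' := by
    intro r r' h
    obtain ⟨s, hs⟩ := (hker (r - r')).mp (by rw [map_sub, h, sub_self])
    linear_combination 2*hs + s*h4
  have htausq : ∀ p : K, tau p ^ 2 = tau (p^2) := by
    intro p
    have h1 : tau p ^ 2 = ((sec p)^2)^(2^m) := by rw [htau_def]; ring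
    rw [h1]
    exact hcong ((sec p)^2) (sec (p^2)) (by rw [map_pow, hsec, hsec])
  have htauadd : ∀ x y c : K, c^2 = x*y → tau x + tau y = tau (x+y) + 2 * tau c := by
    intro x y c hc
    obtain ⟨a, ha⟩ := hsqsurj x
    obtain ⟨b, hb⟩ := hsqsurj y
    -- decompose tau a + tau b
    obtain ⟨s, hs⟩ := (hker (tau a + tau b - tau (a+b))).mp
      (by simp only [map_add, map_sub, hμτ]; ring)
    have hdecomp : tau a + tau b = tau (a+b) + 2 * tau (μ s) := by
      have h2s : 2*s = 2*tau (μ s) := htwo s (tau (μ s)) (hμτ _).symm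
      linear_combination hs + h2s
    -- square it
    have hsq2 : (tau a + tau b)^2 = tau ((a+b)^2) := by
      rw [hdecomp]
      have : (tau (a+b) + 2 * tau (μ s))^2 = tau (a+b)^2 := by
        linear_combination (tau (a+b) * tau (μ s) + tau (μ s)^2)*h4
      rw [this, htausq]
    have hexp : (tau a + tau b)^2 = tau (a^2) + tau (b^2) + 2 * (tau a * tau b) := by
      linear_combination htausq a + htausq b
    have hab2 : (a+b)^2 = a^2 + b^2 := by linear_combination a*b*h2K
    have hEQ : tau (a^2 + b^2) = tau (a^2) + tau (b^2) + 2 * (tau a * tau b) := by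
      rw [← hab2, ← hsq2, hexp]
    have htaumul : 2 * (tau a * tau b) = 2 * tau c := by
      have hc' : a*b = c := hsqinj (a*b) c (by rw [hc, ← ha, ← hb]; ring)
      refine htwo _ _ ?_
      rw [map_mul, hμτ, hμτ, hμτ, hc']
    rw [ha, hb] at hEQ
    linear_combination -hEQ - htaumul - (tau c)*h4
  have htau2cancel : ∀ a c : K, 2 * tau a = 2 * tau c → a = c := by
    intro a c h
    obtain ⟨s, hs⟩ := hann (tau a - tau c) (by linear_combination h)
    have : a - c = 2 * μ s := by
      have := congrArg μ hs
      simpa [map_sub, hμτ, map_ofNat] using this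
    rw [h2K] at this
    linear_combination this
  -- key sum lemma
  have hsumlem : ∀ x y z w c : K, x + y + z + w = 0 →
      c^2 = x*y + x*z + x*w + y*z + y*w + z*w →
      tau x + tau y + tau z + tau w = 2 * tau c := by
    intro x y z w c hsum hc
    obtain ⟨c1, hc1⟩ := hsqsurj (x*y)
    obtain ⟨c2, hc2⟩ := hsqsurj ((x+y)*z)
    obtain ⟨c3, hc3⟩ := hsqsurj ((x+y+z)*w)
    have e1 := htauadd x y c1 hc1
    have e2 := htauadd (x+y) z c2 hc2
    have e3 := htauadd (x+y+z) w c3 hc3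
    rw [hsum, htau0] at e3
    have m12 : 2*(tau c1 + tau c2) = 2*tau (c1 + c2) :=
      htwo _ _ (by simp [map_add, hμτ])
    have m123 : 2*(tau (c1+c2) + tau c3) = 2*tau (c1 + c2 + c3) :=
      htwo _ _ (by simp [map_add, hμτ])
    have hccc : c1 + c2 + c3 = c := by
      apply hsqinj
      have hex : (c1+c2+c3)^2 = c1^2+c2^2+c3^2 := by
        linear_combination (c1*c2+c1*c3+c2*c3)*h2K
      rw [hex, hc1, hc2, hc3, hc]
      ring
    rw [hccc] at m123
    linear_combination e1 + e2 + e3 + m12 + m123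
  set b := μ B with hbdef
  have htauB : tau b = B := htaufix B hB
  have hcond : ∀ X Y Z W : R, X^(2^m) = X → Y^(2^m) = Y → Z^(2^m) = Z → W^(2^m) = W →
      (X + Y + Z + W = 2*B ↔
       (μ X + μ Y + μ Z + μ W = 0 ∧
        μ X * μ Y + μ X * μ Z + μ X * μ W + μ Y * μ Z + μ Y * μ W + μ Z * μ W = b^2)) := by
    intro X Y Z W hX hY hZ hW
    constructor
    · intro hS
      have hsum0 : μ X + μ Y + μ Z + μ W = 0 := by
        have h := congrArg μ hS
        rw [map_add, map_add, map_add, map_mul, map_ofNat, h2K, zero_mul] at h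
        exact h
      refine ⟨hsum0, ?_⟩
      obtain ⟨c, hc⟩ := hsqsurj
        (μ X * μ Y + μ X * μ Z + μ X * μ W + μ Y * μ Z + μ Y * μ W + μ Z * μ W)
      have hS2 : tau (μ X) + tau (μ Y) + tau (μ Z) + tau (μ W) = 2 * tau c :=
        hsumlem _ _ _ _ c hsum0 hc
      rw [htaufix X hX, htaufix Y hY, htaufix Z hZ, htaufix W hW] at hS2
      have h2c : 2 * tau c = 2 * tau b := by rw [← hS2, hS, htauB]
      have hcb := htau2cancel c b h2c
      rw [← hc, hcb]
    · rintro ⟨hsum0, hE⟩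
      have hS2 := hsumlem (μ X) (μ Y) (μ Z) (μ W) b hsum0 hE.symm
      rw [htaufix X hX, htaufix Y hY, htaufix Z hZ, htaufix W hW, htauB] at hS2
      exact hS2
  exact Nat.card_congr
    { toFun := fun t => ⟨(μ t.1.1, μ t.1.2.1, μ t.1.2.2.1, μ t.1.2.2.2), by
        obtain ⟨⟨X,Y,Z,W⟩, ⟨hX,hY,hZ,hW⟩, hS, hC⟩ := t
        have h := (hcond X Y Z W hX hY hZ hW).mp hS
        exact ⟨h.1, h.2, hC⟩⟩
      invFun := fun v => ⟨(tau v.1.1, tau v.1.2.1, tau v.1.2.2.1, tau v.1.2.2.2), by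
        obtain ⟨⟨x,y,z,w⟩, h0, hE, hC⟩ := v
        refine ⟨⟨htauT _, htauT _, htauT _, htauT _⟩, ?_, ?_⟩
        · refine (hcond _ _ _ _ (htauT x) (htauT y) (htauT z) (htauT w)).mpr ?_
          rw [hμτ, hμτ, hμτ, hμτ]
          exact ⟨h0, hE⟩
        · rw [hμτ, hμτ, hμτ, hμτ]
          exact hC⟩
      left_inv := by
        rintro ⟨⟨X,Y,Z,W⟩, ⟨hX,hY,hZ,hW⟩, hS, hC⟩
        refine Subtype.ext ?_
        show (tau (μ X), tau (μ Y), tau (μ Z), tau (μ W)) = (X, Y, Z, W)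
        rw [htaufix X hX, htaufix Y hY, htaufix Z hZ, htaufix W hW]
      right_inv := by
        rintro ⟨⟨x,y,z,w⟩, h⟩
        refine Subtype.ext ?_
        show (μ (tau x), μ (tau y), μ (tau z), μ (tau w)) = (x, y, z, w)
        rw [hμτ, hμτ, hμτ, hμτ] }
end Teich
open Polynomial Function

section Struct

private abbrev cst : ZMod 4 →+* ZMod 2 := ZMod.castHom (show (2:ℕ) ∣ 4 by norm_num) (ZMod 2)

private lemma cst_surj : Surjective cst := by
  intro y
  fin_cases y
  · exact ⟨0, map_zero _⟩
  · exact ⟨1, map_one _⟩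

private lemma ker_map_cst : RingHom.ker (mapRingHom cst)
    = Ideal.span {(C (2: ZMod 4) : Polynomial (ZMod 4))} := by
  have hkerc : RingHom.ker (cst) = Ideal.span {(2 : ZMod 4)} := by
    ext x
    rw [RingHom.mem_ker, Ideal.mem_span_singleton']
    revert x; decide +kernel
  rw [Polynomial.ker_mapRingHom, hkerc, Ideal.map_span, Set.image_singleton]

private noncomputable def e3 : (Polynomial (ZMod 4) ⧸ Ideal.span {(C (2: ZMod 4) : Polynomial (ZMod 4))})
    ≃+* Polynomial (ZMod 2) :=
  (Ideal.quotEquivOfEq ker_map_cst.symm).trans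
    (RingHom.quotientKerEquivOfSurjective (map_surjective _ cst_surj))

private lemma e3_mk (p : Polynomial (ZMod 4)) :
    e3 (Ideal.Quotient.mk _ p) = p.map cst := by
  simp [e3, Ideal.quotEquivOfEq_mk, RingHom.quotientKerEquivOfSurjective, RingHom.kerLift_mk]

variable (f : Polynomial (ZMod 4))

/-- `R/2R ≅ 𝔽₂[X]/(f mod 2)`. -/
noncomputable def resEquiv :
    (AdjoinRoot f ⧸ (Ideal.span {2} : Ideal (AdjoinRoot f))) ≃+* AdjoinRoot (f.map cst) := by
  have h1 : (Ideal.span {2} : Ideal (AdjoinRoot f))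
      = Ideal.map (Ideal.Quotient.mk (Ideal.span {f})) (Ideal.span {(C (2: ZMod 4) : Polynomial (ZMod 4))}) := by
    rw [Ideal.map_span, Set.image_singleton,
      show ((Ideal.Quotient.mk (Ideal.span {f})) (C 2) : AdjoinRoot f) = 2 by
        rw [map_ofNat C 2, map_ofNat]]
    rfl
  have hg : Ideal.map (e3 : (Polynomial (ZMod 4) ⧸ Ideal.span {(C (2: ZMod 4) : Polynomial (ZMod 4))}) →+* Polynomial (ZMod 2))
      (Ideal.map (Ideal.Quotient.mk (Ideal.span {(C (2: ZMod 4) : Polynomial (ZMod 4))})) (Ideal.span {f}))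
      = Ideal.span {f.map cst} := by
    rw [Ideal.map_span, Set.image_singleton, Ideal.map_span, Set.image_singleton]
    norm_num [e3_mk]
  haveI : (Ideal.map (Ideal.Quotient.mk (Ideal.span {f})) (Ideal.span {(C (2: ZMod 4) : Polynomial (ZMod 4))}) : Ideal (AdjoinRoot f)).IsTwoSided :=
    ⟨fun b ha => by rw [mul_comm]; exact Ideal.mul_mem_left _ _ ha⟩
  exact (@Ideal.quotEquivOfEq _ _ _ _ _ this h1).trans
    ((DoubleQuot.quotQuotEquivComm (Ideal.span {f}) (Ideal.span {(C (2: ZMod 4) : Polynomial (ZMod 4))})).trans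
      (Ideal.quotientEquiv _ (Ideal.span {f.map cst}) e3 hg.symm))

end Struct

/-- For `B ∈ 𝒯` with `B ≠ 0` and `d ∈ 𝔽_q`, the number of quadruples
`(X,Y,Z,W) ∈ 𝒯⁴` with `X + Y + Z + W = 2B` in `R` and `x³ + y³ + z³ + w³ = b³·d` in `𝔽_q`
equals `3·2^m` if `d = 0`, `0` if `d ∈ M₀ ∪ M₁`, and `6·2^m` if `d ∈ M₃`. -/
theorem statement16 (m : ℕ) (hm : Odd m) (hmpos : 0 < m)
    (f : Polynomial (ZMod 4)) (hmonic : f.Monic) (hdeg : f.natDegree = m)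
    (hirr : Irreducible (f.map (ZMod.castHom (show (2:ℕ) ∣ 4 by norm_num) (ZMod 2))))
    (B : AdjoinRoot f) (hB : B ^ 2 ^ m = B) (hB0 : B ≠ 0)
    (d : ResField f) :
    (d = 0 →
      Nat.card {t : AdjoinRoot f × AdjoinRoot f × AdjoinRoot f × AdjoinRoot f //
        (t.1 ^ 2 ^ m = t.1 ∧ t.2.1 ^ 2 ^ m = t.2.1 ∧ t.2.2.1 ^ 2 ^ m = t.2.2.1 ∧
          t.2.2.2 ^ 2 ^ m = t.2.2.2) ∧
        t.1 + t.2.1 + t.2.2.1 + t.2.2.2 = 2 * B ∧ muRed f t.1 ^ 3 + muRed f t.2.1 ^ 3 + muRed f t.2.2.1 ^ 3 + muRed f t.2.2.2 ^ 3 = muRed f B ^ 3 * d} = 3 * 2 ^ m) ∧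
    (d ≠ 0 → (cubicRoots f d = 0 ∨ cubicRoots f d = 1) →
      Nat.card {t : AdjoinRoot f × AdjoinRoot f × AdjoinRoot f × AdjoinRoot f //
        (t.1 ^ 2 ^ m = t.1 ∧ t.2.1 ^ 2 ^ m = t.2.1 ∧ t.2.2.1 ^ 2 ^ m = t.2.2.1 ∧
          t.2.2.2 ^ 2 ^ m = t.2.2.2) ∧
        t.1 + t.2.1 + t.2.2.1 + t.2.2.2 = 2 * B ∧ muRed f t.1 ^ 3 + muRed f t.2.1 ^ 3 + muRed f t.2.2.1 ^ 3 + muRed f t.2.2.2 ^ 3 = muRed f B ^ 3 * d} = 0) ∧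
    (d ≠ 0 → cubicRoots f d = 3 →
      Nat.card {t : AdjoinRoot f × AdjoinRoot f × AdjoinRoot f × AdjoinRoot f //
        (t.1 ^ 2 ^ m = t.1 ∧ t.2.1 ^ 2 ^ m = t.2.1 ∧ t.2.2.1 ^ 2 ^ m = t.2.2.1 ∧
          t.2.2.2 ^ 2 ^ m = t.2.2.2) ∧
        t.1 + t.2.1 + t.2.2.1 + t.2.2.2 = 2 * B ∧ muRed f t.1 ^ 3 + muRed f t.2.1 ^ 3 + muRed f t.2.2.1 ^ 3 + muRed f t.2.2.2 ^ 3 = muRed f B ^ 3 * d} = 6 * 2 ^ m) := by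
  classical
  haveI : Fact (Irreducible (f.map cst)) := ⟨hirr⟩
  have hgmonic : (f.map cst).Monic := hmonic.map _
  have hgdim : (f.map cst).natDegree = m := by rw [hmonic.natDegree_map, hdeg]
  let pb := AdjoinRoot.powerBasis' hgmonic
  have hpbdim : pb.dim = m := by rw [AdjoinRoot.powerBasis'_dim, hgdim]
  have hFcard : Nat.card (AdjoinRoot (f.map cst)) = 2 ^ m := by
    rw [Nat.card_congr pb.basis.equivFun.toEquiv, Nat.card_eq_fintype_card,
      Fintype.card_fun, hpbdim]
    norm_num
  haveI hFfin : Finite (AdjoinRoot (f.map cst)) :=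
    Finite.of_equiv _ pb.basis.equivFun.toEquiv.symm
  let eKF : ResField f ≃+* AdjoinRoot (f.map cst) := resEquiv f
  have hKfield : IsField (ResField f) :=
    MulEquiv.isField (Field.toIsField (AdjoinRoot (f.map cst))) eKF.toMulEquiv
  letI : Field (ResField f) := hKfield.toField
  haveI : Finite (ResField f) := Finite.of_equiv _ eKF.toEquiv.symm
  letI : Fintype (ResField f) := Fintype.ofFinite _
  have hKcard : Fintype.card (ResField f) = 2 ^ m := by
    rw [← Nat.card_eq_fintype_card, Nat.card_congr eKF.toEquiv, hFcard]
  have h2K : (2 : ResField f) = 0 := by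
    have h := Ideal.Quotient.eq_zero_iff_mem.mpr
      (Ideal.mem_span_singleton_self (2 : AdjoinRoot f))
    rwa [map_ofNat] at h
  have h4R : (4 : AdjoinRoot f) = 0 := by
    have h := map_ofNat (algebraMap (ZMod 4) (AdjoinRoot f)) 4
    rw [← h, show (4 : ZMod 4) = 0 by decide, map_zero]
  have hker : ∀ r : AdjoinRoot f, muRed f r = 0 ↔ ∃ s, r = 2*s := by
    intro r
    rw [show muRed f r = Ideal.Quotient.mk _ r from rfl, Ideal.Quotient.eq_zero_iff_mem,
      Ideal.mem_span_singleton]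
    exact dvd_def
  have hann : ∀ r : AdjoinRoot f, 2*r = 0 → ∃ s, r = 2*s := by
    intro r h
    set pbR := AdjoinRoot.powerBasis' hmonic with hpbR
    have key : ∀ c : ZMod 4, 2*c = 0 → ∃ u, c = 2*u := by decide
    have h2r : (2:ZMod 4) • r = 2 * r := by rw [Algebra.smul_def, map_ofNat]
    have hrepr : ∀ i, 2 * pbR.basis.repr r i = 0 := by
      intro i
      have h0 : pbR.basis.repr ((2:ZMod 4) • r) = (2:ZMod 4) • pbR.basis.repr r :=
        map_smul _ _ _
      have h1 : pbR.basis.repr ((2:ZMod 4) • r) = 0 := by rw [h2r, h, map_zero]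
      have := congrArg (fun v => v i) (h0.symm.trans h1)
      simpa [smul_eq_mul] using this
    choose u hu using fun i => key _ (hrepr i)
    refine ⟨∑ i, u i • pbR.basis i, ?_⟩
    calc r = ∑ i, pbR.basis.repr r i • pbR.basis i := (pbR.basis.sum_repr r).symm
    _ = ∑ i, (2 * u i) • pbR.basis i := Finset.sum_congr rfl fun i _ => by rw [hu i]
    _ = 2 * ∑ i, u i • pbR.basis i := by
        rw [Finset.mul_sum]
        refine Finset.sum_congr rfl fun i _ => ?_
        rw [mul_smul, Algebra.smul_def, map_ofNat]
  have hfix : ∀ x : ResField f, x^(2^m) = x := fun x => by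
    rw [← hKcard]; exact FiniteField.pow_card x
  have hsqinj : ∀ a c : ResField f, a^2 = c^2 → a = c := fun a c h => sq_inj' h2K h
  have hsqsurj : ∀ a : ResField f, ∃ c, c^2 = a := by
    have hinj : Injective (fun c : ResField f => c^2) := fun a b h => sq_inj' h2K h
    exact fun a => Finite.injective_iff_surjective.mp hinj a
  have hμsurj : Surjective (muRed f) := Ideal.Quotient.mk_surjective
  have hb : muRed f B ≠ 0 := by
    intro hb0'
    obtain ⟨s, hs⟩ := (hker B).mp hb0'
    have hB2 : B^2 = 0 := by rw [hs]; linear_combination (s^2)*h4R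
    obtain ⟨k, hk⟩ : ∃ k, m = k + 1 := ⟨m-1, (Nat.succ_pred_eq_of_pos hmpos).symm⟩
    refine hB0 ?_
    calc B = B ^ 2 ^ m := hB.symm
    _ = (B^2)^(2^k) := by rw [← pow_mul, hk, pow_succ, mul_comm]
    _ = 0 := by rw [hB2, zero_pow (pow_ne_zero k two_ne_zero)]
  have hbridge := bridge_card (muRed f) m hmpos h4R hμsurj hker hann hfix h2K hsqinj hsqsurj B hB d
  have hcount := count_quads h2K hb d
  have hNK : Nat.card (ResField f) = 2 ^ m := by rw [Nat.card_eq_fintype_card, hKcard]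
  refine ⟨?_, ?_, ?_⟩
  · intro hd0
    subst hd0
    rw [hbridge, hcount, hNK, count_pairs_zero h2K]
    exact Nat.mul_comm _ _
  · intro hd hN
    rw [hbridge, hcount, count_pairs_ne h2K hd]
    have hcr : cubicRoots f d = Nat.card {z : ResField f // z ^ 3 + z + d = 0} := rfl
    rcases hN with h | h <;> rw [← hcr, h] <;> simp
  · intro hd hN
    rw [hbridge, hcount, count_pairs_ne h2K hd]
    have hcr : Nat.card {z : ResField f // z ^ 3 + z + d = 0} = 3 := hN
    rw [hcr, hNK]
    norm_num [Nat.mul_comm]
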